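/- Let A : ℝ → ℝ be nondecreasing, right-continuous and continuous, with Lebesgue–Stieltjes measure μ_A, let p > 1, β > 0, and let g : ℝ → [0,∞) be Borel measurable. Then for all real numbers t ≤ T: (∫_{(t,T]} g(s) μ_A(ds))^p ≤ ((p−1)/β)^{p−1} · exp(−β·A(t)) · ∫_{(t,T]} exp(β·A(s)) g(s)^p μ_A(ds). -/

import Mathlib

open MeasureTheory

open Real Set Filter Topology
open scoped ENNReal

lemma sublevel_bound (A : StieltjesFunction ℝ) (hA : Continuous A) (t T x : ℝ) :
    A.measure ({s | A s < x} ∩ Set.Ioc t T) ≤ ENNReal.ofReal (x - A t) := by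
  set S := {s | A s < x} ∩ Set.Ioc t T with hS
  rcases S.eq_empty_or_nonempty with h | hne
  · simp [h]
  · have hbdd : BddAbove S := ⟨T, fun s hs => hs.2.2⟩
    set u := sSup S with hu
    have hsub : S ⊆ Set.Ioc t u := fun s hs => ⟨hs.2.1, le_csSup hbdd hs⟩
    have hAu : A u ≤ x := by
      have hev : ∀ v < u, A v < x := by
        intro v hv
        obtain ⟨s, hs, hvs⟩ := exists_lt_of_lt_csSup hne hv
        exact lt_of_le_of_lt (A.mono hvs.le) hs.1
      have htd : Tendsto A (nhdsWithin u (Set.Iio u)) (nhds (A u)) :=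
        (hA.tendsto u).mono_left nhdsWithin_le_nhds
      exact le_of_tendsto htd (eventually_nhdsWithin_of_forall fun v hv => (hev v hv).le)
    calc A.measure S ≤ A.measure (Set.Ioc t u) := measure_mono hsub
      _ = ENNReal.ofReal (A u - A t) := A.measure_Ioc t u
      _ ≤ ENNReal.ofReal (x - A t) := ENNReal.ofReal_le_ofReal (by linarith)

lemma exp_decay_lintegral (c a : ℝ) (hc : 0 < c) :
    ∫⁻ x in Set.Ioi a, ENNReal.ofReal (c * Real.exp (-(c * x)))
      = ENNReal.ofReal (Real.exp (-(c * a))) := by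
  have hint : IntegrableOn (fun x : ℝ => c * Real.exp (-(c * x))) (Set.Ioi a) := by
    simpa [neg_mul, IntegrableOn] using (exp_neg_integrableOn_Ioi a hc).const_mul c
  rw [← ofReal_integral_eq_lintegral_ofReal hint
    (Filter.Eventually.of_forall fun x => by positivity)]
  congr 1
  have hderiv : ∀ x ∈ Set.Ici a, HasDerivAt (fun y => -Real.exp (-(c * y)))
      (c * Real.exp (-(c * x))) x := by
    intro x _
    have h1 : HasDerivAt (fun y : ℝ => -(c * y)) (-c) x := by
      simpa using (hasDerivAt_id x).const_mul (-c)
    have := (h1.exp).neg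
    refine this.congr_deriv ?_
    ring
  have hcy : Tendsto (fun y : ℝ => c * y) atTop atTop :=
    Filter.Tendsto.const_mul_atTop hc tendsto_id
  have hexp : Tendsto (fun y : ℝ => Real.exp (-(c * y))) atTop (nhds 0) :=
    Real.tendsto_exp_neg_atTop_nhds_zero.comp hcy
  have hlim : Tendsto (fun y => -Real.exp (-(c * y))) atTop (nhds 0) := by
    simpa using hexp.neg
  have := integral_Ioi_of_hasDerivAt_of_tendsto' hderiv hint hlim
  rw [this]; ring

lemma exp_linear_lintegral (c a : ℝ) (hc : 0 < c) :
    ∫⁻ x in Set.Ioi a, ENNReal.ofReal (c * Real.exp (-(c * x)) * (x - a))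
      = ENNReal.ofReal (Real.exp (-(c * a)) / c) := by
  have hderiv : ∀ x ∈ Set.Ici a, HasDerivAt
      (fun y => -((y - a) * Real.exp (-(c * y))) - Real.exp (-(c * y)) / c)
      (c * Real.exp (-(c * x)) * (x - a)) x := by
    intro x _
    have h1 : HasDerivAt (fun y : ℝ => -(c * y)) (-c) x := by
      simpa using (hasDerivAt_id x).const_mul (-c)
    have he : HasDerivAt (fun y => Real.exp (-(c * y))) (-c * Real.exp (-(c * x))) x := by
      simpa [mul_comm] using h1.exp
    have hid : HasDerivAt (fun y : ℝ => y - a) 1 x := (hasDerivAt_id x).sub_const a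
    have := ((hid.mul he).neg).sub (he.div_const c)
    refine this.congr_deriv ?_
    field_simp
    ring
  have hpos : ∀ x ∈ Set.Ioi a, 0 ≤ c * Real.exp (-(c * x)) * (x - a) := by
    intro x hx
    have : (0:ℝ) ≤ x - a := by simpa using sub_nonneg.mpr (Set.mem_Ioi.1 hx).le
    positivity
  have hlim : Tendsto (fun y => -((y - a) * Real.exp (-(c * y))) - Real.exp (-(c * y)) / c)
      atTop (nhds 0) := by
    have hcy : Tendsto (fun y : ℝ => c * y) atTop atTop :=
      Filter.Tendsto.const_mul_atTop hc tendsto_id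
    have hexp : Tendsto (fun y : ℝ => Real.exp (-(c * y))) atTop (nhds 0) :=
      Real.tendsto_exp_neg_atTop_nhds_zero.comp hcy
    have hz : Tendsto (fun z : ℝ => z * Real.exp (-z)) atTop (nhds 0) := by
      simpa using Real.tendsto_pow_mul_exp_neg_atTop_nhds_zero 1
    have h1 : Tendsto (fun y : ℝ => (c * y) * Real.exp (-(c * y))) atTop (nhds 0) :=
      (hz.comp hcy).congr fun y => rfl
    have h2 : Tendsto (fun y : ℝ => (y - a) * Real.exp (-(c * y))) atTop (nhds 0) := by
      have h3 := (h1.sub (hexp.const_mul (c * a))).div_const c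
      have h4 : Tendsto (fun y : ℝ => (c * y * Real.exp (-(c * y)) - c * a * Real.exp (-(c * y))) / c) atTop (nhds 0) := by
        convert h3 using 2; ring
      refine h4.congr fun y => ?_
      field_simp
    simpa using (h2.neg).sub (hexp.div_const c)
  have hint : IntegrableOn (fun x : ℝ => c * Real.exp (-(c * x)) * (x - a)) (Set.Ioi a) :=
    integrableOn_Ioi_deriv_of_nonneg' hderiv hpos hlim
  rw [← ofReal_integral_eq_lintegral_ofReal hint
    (ae_restrict_of_forall_mem measurableSet_Ioi hpos)]
  rw [integral_Ioi_of_hasDerivAt_of_nonneg' hderiv hpos hlim]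
  congr 1
  field_simp
  ring

lemma key_bound (A : StieltjesFunction ℝ) (hA : Continuous A) (c t T : ℝ) (hc : 0 < c) :
    ∫⁻ s in Set.Ioc t T, ENNReal.ofReal (Real.exp (-(c * A s))) ∂A.measure
      ≤ ENNReal.ofReal (Real.exp (-(c * A t)) / c) := by
  set F : ℝ × ℝ → ℝ≥0∞ :=
    Set.indicator {q : ℝ × ℝ | A q.1 < q.2} (fun q => ENNReal.ofReal (c * Real.exp (-(c * q.2))))
    with hF
  have hSmeas : MeasurableSet {q : ℝ × ℝ | A q.1 < q.2} :=
    measurableSet_lt (hA.measurable.comp measurable_fst) measurable_snd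
  have hFmeas : Measurable F :=
    (Measurable.indicator (by fun_prop) hSmeas)
  have hstep1 : ∀ s : ℝ, ∫⁻ x, F (s, x) = ENNReal.ofReal (Real.exp (-(c * A s))) := by
    intro s
    have : (fun x => F (s, x)) =
        Set.indicator (Set.Ioi (A s)) (fun x => ENNReal.ofReal (c * Real.exp (-(c * x)))) := by
      ext x
      by_cases h : A s < x <;> simp [hF, Set.indicator_apply, h, Set.mem_Ioi]
    rw [this, lintegral_indicator measurableSet_Ioi, exp_decay_lintegral c (A s) hc]
  calc ∫⁻ s in Set.Ioc t T, ENNReal.ofReal (Real.exp (-(c * A s))) ∂A.measure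
      = ∫⁻ s in Set.Ioc t T, ∫⁻ x, F (s, x) ∂volume ∂A.measure := by
        exact lintegral_congr fun s => (hstep1 s).symm
    _ = ∫⁻ x, ∫⁻ s in Set.Ioc t T, F (s, x) ∂A.measure ∂volume := by
        apply lintegral_lintegral_swap
        exact hFmeas.aemeasurable
    _ ≤ ∫⁻ x, Set.indicator (Set.Ioi (A t))
          (fun x => ENNReal.ofReal (c * Real.exp (-(c * x)) * (x - A t))) x ∂volume := by
        refine lintegral_mono fun x => ?_
        have hcut : MeasurableSet {s : ℝ | A s < x} :=
          measurableSet_lt hA.measurable measurable_const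
        have : ∫⁻ s in Set.Ioc t T, F (s, x) ∂A.measure
            = ENNReal.ofReal (c * Real.exp (-(c * x))) * A.measure ({s | A s < x} ∩ Set.Ioc t T) := by
          have : (fun s => F (s, x)) =
              Set.indicator {s : ℝ | A s < x} (fun _ => ENNReal.ofReal (c * Real.exp (-(c * x)))) := by
            ext s
            by_cases h : A s < x <;> simp [hF, Set.indicator_apply, h]
          rw [this, lintegral_indicator_const hcut, Measure.restrict_apply hcut]
        rw [this]
        by_cases hx : A t < x
        · rw [Set.indicator_of_mem (Set.mem_Ioi.2 hx)]
          calc ENNReal.ofReal (c * Real.exp (-(c * x))) * A.measure ({s | A s < x} ∩ Set.Ioc t T)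
              ≤ ENNReal.ofReal (c * Real.exp (-(c * x))) * ENNReal.ofReal (x - A t) :=
                mul_le_mul_right (sublevel_bound A hA t T x) _
            _ = ENNReal.ofReal (c * Real.exp (-(c * x)) * (x - A t)) :=
                (ENNReal.ofReal_mul (by positivity)).symm
        · have hempty : {s | A s < x} ∩ Set.Ioc t T = ∅ := by
            ext s
            simp only [Set.mem_inter_iff, Set.mem_setOf_eq, Set.mem_Ioc, Set.mem_empty_iff_false,
              iff_false, not_and, and_imp]
            intro hAs hts _
            exact absurd (lt_of_le_of_lt (le_trans (not_lt.1 hx) (A.mono hts.le)) hAs) (lt_irrefl _)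
          rw [hempty]
          simp
    _ = ENNReal.ofReal (Real.exp (-(c * A t)) / c) := by
        rw [lintegral_indicator measurableSet_Ioi, exp_linear_lintegral c (A t) hc]


/-- Weighted Hölder estimate: for a nondecreasing right-continuous and continuous
function `A : ℝ → ℝ` (bundled as a Stieltjes function) with Lebesgue–Stieltjes
measure `A.measure`, `p > 1`, `β > 0` and a Borel measurable `g : ℝ → [0,∞)`,
for all `t ≤ T` one has
`(∫_{(t,T]} g dA)^p ≤ ((p-1)/β)^(p-1) · e^{-β A(t)} · ∫_{(t,T]} e^{β A(s)} g(s)^p dA(s)`. -/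
theorem weighted_holder_stieltjes (A : StieltjesFunction ℝ) (hA : Continuous A)
    (p β : ℝ) (hp : 1 < p) (hβ : 0 < β)
    (g : ℝ → ℝ) (hg : ∀ s, 0 ≤ g s) (hgm : Measurable g) :
    ∀ t T : ℝ, t ≤ T →
      (∫⁻ s in Set.Ioc t T, ENNReal.ofReal (g s) ∂A.measure) ^ p
        ≤ ENNReal.ofReal (((p - 1) / β) ^ (p - 1) * Real.exp (-β * A t)) *
            ∫⁻ s in Set.Ioc t T, ENNReal.ofReal (Real.exp (β * A s) * g s ^ p) ∂A.measure := by
  intro t T htT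
  have hp0 : (0:ℝ) < p := by linarith
  have hp1 : (0:ℝ) < p - 1 := by linarith
  set q : ℝ := p / (p - 1) with hqdef
  have hpq : p.HolderConjugate q := Real.HolderConjugate.conjExponent hp
  have hq0 : (0:ℝ) < q := hpq.symm.pos
  set c : ℝ := β / (p - 1) with hcdef
  have hc : 0 < c := div_pos hβ hp1
  set μ := A.measure.restrict (Set.Ioc t T) with hμ
  set f1 : ℝ → ℝ≥0∞ := fun s => ENNReal.ofReal (Real.exp (β * A s / p) * g s) with hf1
  set f2 : ℝ → ℝ≥0∞ := fun s => ENNReal.ofReal (Real.exp (-(β * A s / p))) with hf2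
  have hf1m : AEMeasurable f1 μ := by
    apply Measurable.aemeasurable
    exact ENNReal.measurable_ofReal.comp
      ((((hA.measurable.const_mul β).div_const p).exp).mul hgm)
  have hf2m : AEMeasurable f2 μ := by
    apply Measurable.aemeasurable
    exact ENNReal.measurable_ofReal.comp (((hA.measurable.const_mul β).div_const p).neg.exp)
  have hmul : ∀ s, ENNReal.ofReal (g s) = f1 s * f2 s := by
    intro s
    rw [hf1, hf2, ← ENNReal.ofReal_mul (mul_nonneg (Real.exp_pos _).le (hg s))]
    congr 1
    rw [mul_comm (Real.exp _) (g s), mul_assoc, ← Real.exp_add]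
    simp
  have hf1p : ∀ s, f1 s ^ p = ENNReal.ofReal (Real.exp (β * A s) * g s ^ p) := by
    intro s
    rw [hf1, ENNReal.ofReal_rpow_of_nonneg (mul_nonneg (Real.exp_pos _).le (hg s)) hp0.le]
    congr 1
    rw [Real.mul_rpow (Real.exp_pos _).le (hg s), ← Real.exp_mul]
    congr 2
    field_simp
  have hf2q : ∀ s, f2 s ^ q = ENNReal.ofReal (Real.exp (-(c * A s))) := by
    intro s
    rw [hf2, ENNReal.ofReal_rpow_of_nonneg (Real.exp_pos _).le hq0.le, ← Real.exp_mul]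
    congr 2
    rw [hcdef, hqdef]
    field_simp
  have hH := ENNReal.lintegral_mul_le_Lp_mul_Lq μ hpq hf1m hf2m
  have hstart : ∫⁻ s, ENNReal.ofReal (g s) ∂μ = ∫⁻ s, f1 s * f2 s ∂μ :=
    lintegral_congr fun s => hmul s
  set X := ∫⁻ s, f1 s ^ p ∂μ with hX
  set Y := ∫⁻ s, f2 s ^ q ∂μ with hY
  have hmain : (∫⁻ s, ENNReal.ofReal (g s) ∂μ) ^ p ≤ X * Y ^ (p - 1) := by
    calc (∫⁻ s, ENNReal.ofReal (g s) ∂μ) ^ p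
        ≤ (X ^ (1/p) * Y ^ (1/q)) ^ p := by
          refine ENNReal.rpow_le_rpow ?_ hp0.le
          rw [hstart]; exact hH
      _ = X * Y ^ (p - 1) := by
          rw [ENNReal.mul_rpow_of_nonneg _ _ hp0.le, ← ENNReal.rpow_mul, ← ENNReal.rpow_mul]
          rw [one_div_mul_cancel hp0.ne', ENNReal.rpow_one]
          congr 1
          rw [hqdef]
          field_simp
  have hYb : Y ^ (p - 1) ≤ ENNReal.ofReal (((p - 1) / β) ^ (p - 1) * Real.exp (-β * A t)) := by
    have h1 : Y ≤ ENNReal.ofReal (Real.exp (-(c * A t)) / c) := by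
      rw [hY]
      calc ∫⁻ s, f2 s ^ q ∂μ = ∫⁻ s in Set.Ioc t T, ENNReal.ofReal (Real.exp (-(c * A s))) ∂A.measure :=
          lintegral_congr fun s => hf2q s
        _ ≤ ENNReal.ofReal (Real.exp (-(c * A t)) / c) := key_bound A hA c t T hc
    calc Y ^ (p - 1) ≤ ENNReal.ofReal (Real.exp (-(c * A t)) / c) ^ (p - 1) :=
        ENNReal.rpow_le_rpow h1 hp1.le
      _ = ENNReal.ofReal ((Real.exp (-(c * A t)) / c) ^ (p - 1)) :=
        ENNReal.ofReal_rpow_of_nonneg (by positivity) hp1.le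
      _ = ENNReal.ofReal (((p - 1) / β) ^ (p - 1) * Real.exp (-β * A t)) := by
          congr 1
          have hcc : -(c * A t) * (p - 1) = -β * A t := by
            rw [hcdef]; field_simp
          rw [Real.div_rpow (Real.exp_pos _).le hc.le, ← Real.exp_mul, hcc,
            div_eq_mul_inv, mul_comm]
          congr 1
          rw [← Real.inv_rpow hc.le]
          congr 1
          rw [hcdef, inv_div]
  have hXeq : X = ∫⁻ s in Set.Ioc t T, ENNReal.ofReal (Real.exp (β * A s) * g s ^ p) ∂A.measure :=
    lintegral_congr fun s => hf1p s
  calc (∫⁻ s in Set.Ioc t T, ENNReal.ofReal (g s) ∂A.measure) ^ p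
      ≤ X * Y ^ (p - 1) := hmain
    _ ≤ X * ENNReal.ofReal (((p - 1) / β) ^ (p - 1) * Real.exp (-β * A t)) :=
        mul_le_mul_right hYb _
    _ = ENNReal.ofReal (((p - 1) / β) ^ (p - 1) * Real.exp (-β * A t)) *
          ∫⁻ s in Set.Ioc t T, ENNReal.ofReal (Real.exp (β * A s) * g s ^ p) ∂A.measure := by
        rw [hXeq, mul_comm]
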